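/- Let E be a finite-dimensional real normed vector space and A : E → (E →L[ℝ] E →L[ℝ] E) a smooth map, with induced multiplication (X∘Y)(p) = A(p)(X(p))(Y(p)) and pencil of connections ∇_{λ,X}Y := ∇_X Y + λ X∘Y for λ ∈ ℝ. Then the following are equivalent: (a) for every λ ∈ ℝ, ∇_λ is torsionless and flat, i.e. ∇_{λ,X}Y − ∇_{λ,Y}X = [X,Y] and ∇_{λ,X}(∇_{λ,Y}Z) − ∇_{λ,Y}(∇_{λ,X}Z) − ∇_{λ,[X,Y]}Z = 0 for all smooth vector fields X,Y,Z; (b) A(p) is symmetric for every p, the multiplication ∘ is associative, and there exists a smooth map C : E → E with A(p)(v)(w) = (D²C)(p)(v,w) for all p,v,w (i.e. (E, ∘, ∇) is an F-manifold with a compatible flat structure). -/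

import Mathlib

open ContDiff

variable {E : Type*} [NormedAddCommGroup E] [NormedSpace ℝ E]

/-- Lie bracket of vector fields on a normed space:
`[X,Y](p) = (DY)(p)(X(p)) - (DX)(p)(Y(p))`. -/
noncomputable def lieB (X Y : E → E) : E → E :=
  fun p => fderiv ℝ Y p (X p) - fderiv ℝ X p (Y p)

/-- Multiplication on vector fields induced by a field of bilinear maps `A`:
`(X ∘ Y)(p) = A(p)(X(p))(Y(p))`. -/
noncomputable def mulA (A : E → (E →L[ℝ] E →L[ℝ] E)) (X Y : E → E) : E → E :=
  fun p => A p (X p) (Y p)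

/-- The pencil of connections `∇_{λ,X}Y := ∇_X Y + λ X∘Y`. -/
noncomputable def nabLam (A : E → (E →L[ℝ] E →L[ℝ] E)) (l : ℝ) (X Y : E → E) : E → E :=
  fun p => fderiv ℝ Y p (X p) + l • mulA A X Y p

section auxiliary

open MeasureTheory intervalIntegral Metric

set_option synthInstance.maxHeartbeats 1000000 in

theorem exists_antideriv {E F : Type*} [NormedAddCommGroup E] [NormedSpace ℝ E] [FiniteDimensional ℝ E]
    [NormedAddCommGroup F] [NormedSpace ℝ F] [FiniteDimensional ℝ F]
    (f : E → (E →L[ℝ] F)) (hf : ContDiff ℝ ∞ f)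
    (hsymm : ∀ p u v, fderiv ℝ f p u v = fderiv ℝ f p v u) :
    ∃ g : E → F, ContDiff ℝ ∞ g ∧ ∀ p, fderiv ℝ g p = f p := by
  classical
  have hfd : Differentiable ℝ f := hf.differentiable (by simp)
  have hfc : Continuous f := hf.continuous
  have hf'c : Continuous (fderiv ℝ f) := (hf.fderiv_right (m := ∞) (by simp)).continuous
  set g : E → F := fun p => ∫ t in (0:ℝ)..1, f (t • p) p with hg
  -- the candidate derivative of the integrand
  set F' : E → ℝ → (E →L[ℝ] F) := fun x t =>
    (f (t • x)).comp (ContinuousLinearMap.id ℝ E) +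
      ((fderiv ℝ f (t • x)).comp (t • ContinuousLinearMap.id ℝ E)).flip x with hF'
  have hdiff : ∀ (t : ℝ) (x : E), HasFDerivAt (fun y => f (t • y) y) (F' x t) x := by
    intro t x
    have h1 : HasFDerivAt (fun y : E => t • y) (t • ContinuousLinearMap.id ℝ E) x :=
      (hasFDerivAt_id x).const_smul t
    have h2 : HasFDerivAt (fun y : E => f (t • y))
        ((fderiv ℝ f (t • x)).comp (t • ContinuousLinearMap.id ℝ E)) x :=
      (hfd (t • x)).hasFDerivAt.comp x h1
    exact h2.clm_apply (hasFDerivAt_id x)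
  have hF'cont : ∀ x₀ : E, Continuous (fun t : ℝ => F' x₀ t) := by
    intro x₀
    have h1 : Continuous fun t : ℝ => f (t • x₀) :=
      hfc.comp (continuous_id.smul continuous_const)
    have h2 : Continuous fun t : ℝ => fderiv ℝ f (t • x₀) :=
      hf'c.comp (continuous_id.smul continuous_const)
    have h3 : Continuous fun t : ℝ => t • ContinuousLinearMap.id ℝ E :=
      continuous_id.smul continuous_const
    have h4 : Continuous fun t : ℝ =>
        (fderiv ℝ f (t • x₀)).comp (t • ContinuousLinearMap.id ℝ E) := h2.clm_comp h3
    have h5 : Continuous fun t : ℝ =>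
        ((fderiv ℝ f (t • x₀)).comp (t • ContinuousLinearMap.id ℝ E)).flip :=
      (ContinuousLinearMap.flipₗᵢ ℝ E E F).continuous.comp h4
    exact ((h1.clm_comp continuous_const)).add (h5.clm_apply continuous_const)
  have key : ∀ x₀ : E, HasFDerivAt g (f x₀) x₀ := by
    intro x₀
    -- bound on the closed ball
    obtain ⟨M1, hM1⟩ : ∃ M, ∀ q ∈ closedBall (0:E) (‖x₀‖ + 1), ‖f q‖ ≤ M :=
      (isCompact_closedBall (0:E) (‖x₀‖ + 1)).exists_bound_of_continuousOn hfc.continuousOn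
    obtain ⟨M2, hM2⟩ : ∃ M, ∀ q ∈ closedBall (0:E) (‖x₀‖ + 1), ‖fderiv ℝ f q‖ ≤ M :=
      (isCompact_closedBall (0:E) (‖x₀‖ + 1)).exists_bound_of_continuousOn (f := fderiv ℝ f) hf'c.continuousOn
    have hM2' : 0 ≤ M2 := le_trans (norm_nonneg (fderiv ℝ f 0)) (hM2 0 (by simp; positivity))
    have hint : HasFDerivAt (fun x => ∫ t in (0:ℝ)..1, f (t • x) x)
        (∫ t in (0:ℝ)..1, F' x₀ t) x₀ := by
      apply intervalIntegral.hasFDerivAt_integral_of_dominated_of_fderiv_le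
        (s := ball x₀ 1) (bound := fun _ => M1 + M2 * (‖x₀‖ + 1)) (ball_mem_nhds x₀ one_pos)
      · exact Filter.Eventually.of_forall fun x =>
          ((hfc.comp (continuous_id.smul continuous_const)).clm_apply
            continuous_const).aestronglyMeasurable.restrict
      · exact ((hfc.comp (continuous_id.smul continuous_const)).clm_apply
          continuous_const).intervalIntegrable 0 1
      · exact (hF'cont x₀).aestronglyMeasurable.restrict
      · refine Filter.Eventually.of_forall fun t ht x hx => ?_
        have ht' : t ∈ Set.Ioc (0:ℝ) 1 := by
          simpa [Set.uIoc_of_le (zero_le_one' ℝ)] using ht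
        have htabs : |t| ≤ 1 := by rw [abs_of_pos ht'.1]; exact ht'.2
        have hxnorm : ‖x‖ ≤ ‖x₀‖ + 1 := by
          have := norm_sub_norm_le x x₀
          have hd := le_of_lt (mem_ball_iff_norm.mp hx)
          linarith
        have htx : t • x ∈ closedBall (0:E) (‖x₀‖ + 1) := by
          rw [mem_closedBall, dist_zero_right, norm_smul]
          calc |t| * ‖x‖ ≤ 1 * (‖x₀‖ + 1) := by
                apply mul_le_mul htabs hxnorm (norm_nonneg _) zero_le_one
            _ = ‖x₀‖ + 1 := one_mul _
        calc ‖F' x t‖ ≤ ‖(f (t • x)).comp (ContinuousLinearMap.id ℝ E)‖ +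
              ‖((fderiv ℝ f (t • x)).comp (t • ContinuousLinearMap.id ℝ E)).flip x‖ :=
                norm_add_le _ _
          _ ≤ M1 + M2 * (‖x₀‖ + 1) := by
              apply add_le_add
              · rw [ContinuousLinearMap.comp_id]; exact hM1 _ htx
              · calc ‖((fderiv ℝ f (t • x)).comp (t • ContinuousLinearMap.id ℝ E)).flip x‖
                    ≤ ‖((fderiv ℝ f (t • x)).comp (t • ContinuousLinearMap.id ℝ E)).flip‖ * ‖x‖ :=
                      ContinuousLinearMap.le_opNorm _ _
                  _ = ‖(fderiv ℝ f (t • x)).comp (t • ContinuousLinearMap.id ℝ E)‖ * ‖x‖ := by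
                      rw [ContinuousLinearMap.opNorm_flip]
                  _ ≤ (‖fderiv ℝ f (t • x)‖ * ‖t • ContinuousLinearMap.id ℝ E‖) * ‖x‖ := by
                      apply mul_le_mul_of_nonneg_right (ContinuousLinearMap.opNorm_comp_le _ _)
                        (norm_nonneg _)
                  _ ≤ (M2 * 1) * (‖x₀‖ + 1) := by
                      apply mul_le_mul _ hxnorm (norm_nonneg _) (by positivity)
                      apply mul_le_mul (hM2 _ htx) _ (norm_nonneg _) hM2'
                      calc ‖t • ContinuousLinearMap.id ℝ E‖ ≤ |t| * ‖ContinuousLinearMap.id ℝ E‖ := by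
                            simpa using ContinuousLinearMap.opNorm_smul_le t (ContinuousLinearMap.id ℝ E)
                        _ ≤ 1 * 1 :=
                            mul_le_mul htabs ContinuousLinearMap.norm_id_le (norm_nonneg _)
                              zero_le_one
                        _ = 1 := one_mul 1
                  _ = M2 * (‖x₀‖ + 1) := by ring
      · exact intervalIntegrable_const
      · exact Filter.Eventually.of_forall fun t _ x _ => hdiff t x
    have hderiv : ∀ t : ℝ, HasDerivAt (fun s : ℝ => s • f (s • x₀)) (F' x₀ t) t := by
      intro t
      have hd1 : HasDerivAt (fun s : ℝ => s • x₀) x₀ t := by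
        simpa using (hasDerivAt_id t).smul_const x₀
      have hd2 : HasDerivAt (fun s : ℝ => f (s • x₀)) (fderiv ℝ f (t • x₀) x₀) t :=
        (hfd (t • x₀)).hasFDerivAt.comp_hasDerivAt t hd1
      have hd3 := (hasDerivAt_id t).smul hd2
      have heq : F' x₀ t = t • fderiv ℝ f (t • x₀) x₀ + (1:ℝ) • f (t • x₀) := by
        ext v
        simp only [hF', ContinuousLinearMap.add_apply, ContinuousLinearMap.coe_comp',
          Function.comp_apply, ContinuousLinearMap.flip_apply, ContinuousLinearMap.smul_apply,
          ContinuousLinearMap.coe_id', id_eq, one_smul, ContinuousLinearMap.smul_apply,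
          ContinuousLinearMap.coe_smul', Pi.smul_apply]
        rw [_root_.map_smul, ContinuousLinearMap.smul_apply, hsymm (t • x₀) v x₀]
        abel
      rw [heq]
      exact hd3
    have hival : (∫ t in (0:ℝ)..1, F' x₀ t) = f x₀ := by
      rw [intervalIntegral.integral_eq_sub_of_hasDerivAt (fun t _ => hderiv t)
        ((hF'cont x₀).intervalIntegrable 0 1)]
      simp
    rw [hg]
    exact hival ▸ hint
  refine ⟨g, ?_, fun p => (key p).fderiv⟩
  rw [contDiff_infty_iff_fderiv]
  have : fderiv ℝ g = f := funext fun p => (key p).fderiv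
  exact ⟨fun p => (key p).differentiableAt, this ▸ hf⟩




variable {E : Type*} [NormedAddCommGroup E] [NormedSpace ℝ E]

theorem fderiv_AYZ (A : E → (E →L[ℝ] E →L[ℝ] E)) (hA : ContDiff ℝ ∞ A)
    {Y Z : E → E} (hY : ContDiff ℝ ∞ Y) (hZ : ContDiff ℝ ∞ Z) (p u : E) :
    fderiv ℝ (fun q => A q (Y q) (Z q)) p u
      = fderiv ℝ A p u (Y p) (Z p) + A p (fderiv ℝ Y p u) (Z p)
        + A p (Y p) (fderiv ℝ Z p u) := by
  have h1 : HasFDerivAt (fun q => A q (Y q))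
      ((A p).comp (fderiv ℝ Y p) + (fderiv ℝ A p).flip (Y p)) p :=
    (hA.differentiable (by simp) p).hasFDerivAt.clm_apply
      (hY.differentiable (by simp) p).hasFDerivAt
  have h2 := h1.clm_apply (hZ.differentiable (by simp) p).hasFDerivAt
  rw [h2.fderiv]
  simp only [ContinuousLinearMap.add_apply, ContinuousLinearMap.coe_comp',
    Function.comp_apply, ContinuousLinearMap.flip_apply]
  abel

theorem fderiv_DZY {Y Z : E → E} (hY : ContDiff ℝ ∞ Y) (hZ : ContDiff ℝ ∞ Z) (p u : E) :
    fderiv ℝ (fun q => fderiv ℝ Z q (Y q)) p u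
      = fderiv ℝ (fderiv ℝ Z) p u (Y p) + fderiv ℝ Z p (fderiv ℝ Y p u) := by
  have hZ' : ContDiff ℝ ∞ (fderiv ℝ Z) := hZ.fderiv_right (m := ∞) (by simp)
  have h1 : HasFDerivAt (fun q => fderiv ℝ Z q (Y q))
      ((fderiv ℝ Z p).comp (fderiv ℝ Y p) + (fderiv ℝ (fderiv ℝ Z) p).flip (Y p)) p :=
    (hZ'.differentiable (by simp) p).hasFDerivAt.clm_apply
      (hY.differentiable (by simp) p).hasFDerivAt
  rw [h1.fderiv]
  simp only [ContinuousLinearMap.add_apply, ContinuousLinearMap.coe_comp',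
    Function.comp_apply, ContinuousLinearMap.flip_apply]
  abel

theorem diff_AYZ (A : E → (E →L[ℝ] E →L[ℝ] E)) (hA : ContDiff ℝ ∞ A)
    {Y Z : E → E} (hY : ContDiff ℝ ∞ Y) (hZ : ContDiff ℝ ∞ Z) :
    Differentiable ℝ (fun q => A q (Y q) (Z q)) :=
  ((hA.clm_apply hY).clm_apply hZ).differentiable (by simp)

theorem diff_DZY {Y Z : E → E} (hY : ContDiff ℝ ∞ Y) (hZ : ContDiff ℝ ∞ Z) :
    Differentiable ℝ (fun q => fderiv ℝ Z q (Y q)) :=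
  ((hZ.fderiv_right (m := ∞) (by simp)).clm_apply hY).differentiable (by simp)

theorem fderiv_nab (A : E → (E →L[ℝ] E →L[ℝ] E)) (hA : ContDiff ℝ ∞ A)
    {Y Z : E → E} (hY : ContDiff ℝ ∞ Y) (hZ : ContDiff ℝ ∞ Z) (l : ℝ) (p u : E) :
    fderiv ℝ (fun q => fderiv ℝ Z q (Y q) + l • A q (Y q) (Z q)) p u
      = fderiv ℝ (fderiv ℝ Z) p u (Y p) + fderiv ℝ Z p (fderiv ℝ Y p u)
        + l • (fderiv ℝ A p u (Y p) (Z p) + A p (fderiv ℝ Y p u) (Z p)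
            + A p (Y p) (fderiv ℝ Z p u)) := by
  rw [fderiv_fun_add (diff_DZY hY hZ p) ((diff_AYZ A hA hY hZ p).fun_const_smul l),
    ContinuousLinearMap.add_apply, fderiv_fun_const_smul (diff_AYZ A hA hY hZ p) l,
    ContinuousLinearMap.smul_apply, fderiv_DZY hY hZ p u, fderiv_AYZ A hA hY hZ p u]



end auxiliary

/-- all connections of the pencil are torsionless and flat iff
`(E, ∘, ∇)` is an F-manifold with compatible flat structure (commutative,
associative, with a smooth global vector potential). -/
theorem stmt5 {E : Type*} [NormedAddCommGroup E] [NormedSpace ℝ E] [FiniteDimensional ℝ E]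
    (A : E → (E →L[ℝ] E →L[ℝ] E)) (hA : ContDiff ℝ ∞ A) :
    ((∀ (l : ℝ) (X Y : E → E), ContDiff ℝ ∞ X → ContDiff ℝ ∞ Y →
        (fun p => nabLam A l X Y p - nabLam A l Y X p) = lieB X Y) ∧
     (∀ (l : ℝ) (X Y Z : E → E), ContDiff ℝ ∞ X → ContDiff ℝ ∞ Y → ContDiff ℝ ∞ Z →
        (fun p => nabLam A l X (nabLam A l Y Z) p - nabLam A l Y (nabLam A l X Z) p
          - nabLam A l (lieB X Y) Z p) = fun _ => (0 : E))) ↔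
    ((∀ p u v : E, A p u v = A p v u) ∧
     (∀ p u v w : E, A p (A p u v) w = A p u (A p v w)) ∧
     (∃ C : E → E, ContDiff ℝ ∞ C ∧
        ∀ p v w : E, A p v w = fderiv ℝ (fderiv ℝ C) p v w)) := by
  constructor
  · rintro ⟨htor, hflat⟩
    -- commutativity from torsion-freeness
    have hcomm : ∀ p u v : E, A p u v = A p v u := by
      intro p u v
      have h := congrFun (htor 1 (fun _ => u) (fun _ => v) contDiff_const contDiff_const) p
      simp [nabLam, mulA, lieB] at h
      linear_combination (norm := module) h
    -- flatness with constant fields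
    have hconst : ∀ (l : ℝ) (p u v w : E),
        l • (fderiv ℝ A p u v w) + (l * l) • A p u (A p v w)
          - l • (fderiv ℝ A p v u w) - (l * l) • A p v (A p u w) = 0 := by
      intro l p u v w
      have h := congrFun (hflat l (fun _ => u) (fun _ => v) (fun _ => w)
        contDiff_const contDiff_const contDiff_const) p
      have hYZ : nabLam A l (fun _ : E => v) (fun _ : E => w) = fun q => l • A q v w := by
        funext q; simp [nabLam, mulA]
      have hXZ : nabLam A l (fun _ : E => u) (fun _ : E => w) = fun q => l • A q u w := by
        funext q; simp [nabLam, mulA]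
      have hlie : lieB (fun _ : E => u) (fun _ : E => v) = fun _ : E => (0 : E) := by
        funext q; simp [lieB]
      rw [hYZ, hXZ, hlie] at h
      have hfd1 : ∀ v w u : E, fderiv ℝ (fun q => l • A q v w) p u = l • fderiv ℝ A p u v w := by
        intro v w u
        have hd : DifferentiableAt ℝ (fun q => A q v w) p :=
          (((hA.clm_apply contDiff_const).clm_apply contDiff_const).differentiable (by simp) p)
        rw [fderiv_fun_const_smul hd l, ContinuousLinearMap.smul_apply]
        congr 1
        have := fderiv_AYZ A hA (Y := fun _ : E => v) (Z := fun _ : E => w)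
          contDiff_const contDiff_const p u
        simpa using this
      simp only [nabLam, mulA, hfd1] at h
      simp only [fderiv_const, Pi.zero_apply, ContinuousLinearMap.zero_apply, map_zero,
        _root_.map_smul, ContinuousLinearMap.zero_apply, smul_zero, add_zero, zero_add,
        ContinuousLinearMap.map_zero] at h
      linear_combination (norm := module) h
    have hDA : ∀ p u v w : E, fderiv ℝ A p u v w = fderiv ℝ A p v u w := by
      intro p u v w
      have h1 := hconst 1 p u v w
      have h2 := hconst (-1) p u v w
      norm_num at h1 h2
      linear_combination (norm := module) (2⁻¹ : ℝ) • h1 - (2⁻¹ : ℝ) • h2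
    have hii : ∀ p u v w : E, A p u (A p v w) = A p v (A p u w) := by
      intro p u v w
      have h1 := hconst 1 p u v w
      have h2 := hconst (-1) p u v w
      norm_num at h1 h2
      linear_combination (norm := module) (2⁻¹ : ℝ) • h1 + (2⁻¹ : ℝ) • h2
    refine ⟨hcomm, ?_, ?_⟩
    · intro p u v w
      calc A p (A p u v) w = A p w (A p u v) := hcomm ..
        _ = A p w (A p v u) := by rw [hcomm p u v]
        _ = A p v (A p w u) := hii ..
        _ = A p v (A p u w) := by rw [hcomm p w u]
        _ = A p u (A p v w) := (hii p v u w).symm ▸ rfl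
    · -- construct the potential
      have hsym1 : ∀ p u v : E, fderiv ℝ A p u v = fderiv ℝ A p v u := by
        intro p u v; exact ContinuousLinearMap.ext fun w => hDA p u v w
      obtain ⟨Φ, hΦ, hΦd⟩ := exists_antideriv A hA hsym1
      have hsym2 : ∀ p u v : E, fderiv ℝ Φ p u v = fderiv ℝ Φ p v u := by
        intro p u v; rw [hΦd]; exact hcomm p u v
      obtain ⟨C, hC, hCd⟩ := exists_antideriv Φ hΦ hsym2
      refine ⟨C, hC, fun p v w => ?_⟩
      have : fderiv ℝ C = Φ := funext hCd
      rw [this, hΦd]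
  · rintro ⟨hcomm, hassoc, C, hC, hCd⟩
    have hii : ∀ p u v w : E, A p u (A p v w) = A p v (A p u w) := by
      intro p u v w
      calc A p u (A p v w) = A p u (A p w v) := by rw [hcomm p v w]
        _ = A p (A p u w) v := (hassoc p u w v).symm
        _ = A p v (A p u w) := hcomm ..
    -- third-derivative symmetry
    set g : E → (E →L[ℝ] E) := fderiv ℝ C with hg
    have hgc : ContDiff ℝ ∞ g := hC.fderiv_right (m := ∞) (by simp)
    have hAg : ∀ p, A p = fderiv ℝ g p := by
      intro p
      exact ContinuousLinearMap.ext fun v => ContinuousLinearMap.ext fun w => hCd p v w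
    have hDA : ∀ p u v w : E, fderiv ℝ A p u v w = fderiv ℝ A p v u w := by
      intro p u v w
      have hAg' : A = fderiv ℝ g := funext hAg
      rw [hAg']
      have hf : ∀ y, HasFDerivAt g (fderiv ℝ g y) y :=
        fun y => (hgc.differentiable (by simp) y).hasFDerivAt
      have hx : HasFDerivAt (fderiv ℝ g) (fderiv ℝ (fderiv ℝ g) p) p :=
        ((hgc.fderiv_right (m := ∞) (by simp)).differentiable (by simp) p).hasFDerivAt
      rw [second_derivative_symmetric hf hx u v]
    constructor
    · intro l X Y hX hY
      funext p
      simp only [nabLam, mulA, lieB]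
      rw [hcomm p (X p) (Y p)]
      abel
    · intro l X Y Z hX hY hZ
      funext p
      have hsymZ : fderiv ℝ (fderiv ℝ Z) p (Y p) (X p)
          = fderiv ℝ (fderiv ℝ Z) p (X p) (Y p) := by
        have hf : ∀ y, HasFDerivAt Z (fderiv ℝ Z y) y :=
          fun y => (hZ.differentiable (by simp) y).hasFDerivAt
        have hx : HasFDerivAt (fderiv ℝ Z) (fderiv ℝ (fderiv ℝ Z) p) p :=
          ((hZ.fderiv_right (m := ∞) (by simp)).differentiable (by simp) p).hasFDerivAt
        exact second_derivative_symmetric hf hx (Y p) (X p)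
      have hnab : ∀ Y Z : E → E, nabLam A l Y Z
          = fun q => fderiv ℝ Z q (Y q) + l • A q (Y q) (Z q) := fun _ _ => rfl
      simp only [nabLam, mulA, lieB]
      rw [hnab Y Z, hnab X Z]
      rw [fderiv_nab A hA hY hZ l p (X p), fderiv_nab A hA hX hZ l p (Y p)]
      rw [hsymZ, hDA p (Y p) (X p) (Z p)]
      simp only [map_sub, map_add, _root_.map_smul, ContinuousLinearMap.sub_apply,
        ContinuousLinearMap.add_apply, ContinuousLinearMap.smul_apply]
      rw [hii p (Y p) (X p) (Z p)]
      module
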